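/- arXiv:2509.01155 — 5 statements merged into one kernel-verified Lean document; each statement's English description precedes it below -/
import Mathlib

section
/- Let G = (V,E) be a simple, locally finite, connected, undirected graph, and let Ω ⊂ V be a connected subset such that either the boundary δΩ = {y ∈ V \ Ω : ∃ x ∈ Ω, y ~ x} is nonempty or Ω is infinite. Let c : Ω → [0,∞) and let u : Ω ∪ δΩ → ℝ satisfy -Δu(x) + c(x)u(x) ≥ 0 for all x ∈ Ω (where Δu(x) = Σ_{y~x}(u(y)-u(x))), u ≥ 0 on δΩ, and liminf_{d(x,x₀)→∞, x∈Ω} u(x) ≥ 0. Then u ≥ 0 on Ω. -/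
open SimpleGraph

private lemma ball_finite {V : Type*} (G : SimpleGraph V)
    [∀ v : V, Fintype (G.neighborSet v)] (x₀ : V) :
    ∀ n : ℕ, {x | G.Reachable x₀ x ∧ G.dist x₀ x ≤ n}.Finite := by
  intro n
  induction n with
  | zero =>
    apply Set.Finite.subset (Set.finite_singleton x₀)
    rintro x ⟨hr, hd⟩
    have := hr.dist_eq_zero_iff.mp (Nat.le_zero.mp hd)
    simp [this]
  | succ n ih =>
    have hsub : {x | G.Reachable x₀ x ∧ G.dist x₀ x ≤ n + 1} ⊆
        {x | G.Reachable x₀ x ∧ G.dist x₀ x ≤ n} ∪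
        ⋃ y ∈ {x | G.Reachable x₀ x ∧ G.dist x₀ x ≤ n}, G.neighborSet y := by
      rintro x ⟨hr, hd⟩
      by_cases h : G.dist x₀ x ≤ n
      · exact Or.inl ⟨hr, h⟩
      · obtain ⟨p, hp⟩ := hr.exists_walk_length_eq_dist
        have hq : p.reverse.length = n + 1 := by
          rw [SimpleGraph.Walk.length_reverse, hp]
          omega
        right
        cases hq' : p.reverse with
        | nil => rw [hq'] at hq; simp at hq
        | cons hadj w =>
          rename_i y
          rw [hq'] at hq
          simp only [SimpleGraph.Walk.length_cons] at hq
          have hry : G.Reachable x₀ y := ⟨w.reverse⟩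
          have hdy : G.dist x₀ y ≤ n := by
            rw [SimpleGraph.dist_comm]
            calc G.dist y x₀ ≤ w.length := SimpleGraph.dist_le w
            _ = n := by omega
          refine Set.mem_biUnion (show y ∈ _ from ⟨hry, hdy⟩) ?_
          exact hadj.symm
    exact Set.Finite.subset
      (ih.union (Set.Finite.biUnion ih fun y _ => (G.neighborSet y).toFinite)) hsub

/-- Discrete maximum principle on a locally finite connected graph. -/
theorem discrete_maximum_principle {V : Type*} (G : SimpleGraph V)
    [∀ v : V, Fintype (G.neighborSet v)]
    (hconn : G.Connected)
    (Ω : Set V)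
    (hΩconn : (G.induce Ω).Connected)
    (bd : Set V)
    (hbd : bd = {y | y ∉ Ω ∧ ∃ x ∈ Ω, G.Adj x y})
    (hne : bd.Nonempty ∨ Ω.Infinite)
    (c u : V → ℝ)
    (hc : ∀ x ∈ Ω, 0 ≤ c x)
    (heq : ∀ x ∈ Ω, 0 ≤ -(∑ y ∈ G.neighborFinset x, (u y - u x)) + c x * u x)
    (hb : ∀ y ∈ bd, 0 ≤ u y)
    (x₀ : V)
    (hliminf : ∀ ε : ℝ, 0 < ε → ∃ N : ℕ, ∀ x ∈ Ω, N ≤ G.dist x₀ x → -ε ≤ u x) :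
    ∀ x ∈ Ω, 0 ≤ u x := by
  by_contra hcon
  push_neg at hcon
  obtain ⟨xs, hxs, hus⟩ := hcon
  -- find a global minimum point of u on Ω
  obtain ⟨N, hN⟩ := hliminf (-u xs / 2) (by linarith)
  set S : Set V := {x | x ∈ Ω ∧ u x ≤ u xs} with hS
  have hSfin : S.Finite := by
    apply Set.Finite.subset (ball_finite G x₀ N)
    rintro x ⟨hxΩ, hux⟩
    refine ⟨hconn x₀ x, ?_⟩
    by_contra hd
    have := hN x hxΩ (by omega)
    linarith
  obtain ⟨z, hzS, hzmin⟩ := Set.exists_min_image S u hSfin ⟨xs, hxs, le_refl _⟩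
  obtain ⟨hzΩ, hzle⟩ := hzS
  set m := u z with hm
  have hmneg : m < 0 := lt_of_le_of_lt hzle hus
  have hglobal : ∀ x ∈ Ω, m ≤ u x := by
    intro x hx
    by_cases h : u x ≤ u xs
    · exact hzmin x ⟨hx, h⟩
    · linarith
  -- key local step
  have key : ∀ x ∈ Ω, u x = m → ∀ y, G.Adj x y → y ∈ Ω ∧ u y = m := by
    intro x hx hux y hxy
    have hΩbd : ∀ w, G.Adj x w → w ∈ Ω ∨ w ∈ bd := by
      intro w hw
      by_cases hwΩ : w ∈ Ω
      · exact Or.inl hwΩ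
      · exact Or.inr (by rw [hbd]; exact ⟨hwΩ, x, hx, hw⟩)
    have hterm : ∀ w ∈ G.neighborFinset x, 0 ≤ u w - u x := by
      intro w hw
      rw [SimpleGraph.mem_neighborFinset] at hw
      rcases hΩbd w hw with h | h
      · have := hglobal w h; rw [hux]; linarith
      · have := hb w h; rw [hux]; linarith
    have hsumle : ∑ w ∈ G.neighborFinset x, (u w - u x) ≤ 0 := by
      have h1 := heq x hx
      have h2 : c x * u x ≤ 0 :=
        mul_nonpos_of_nonneg_of_nonpos (hc x hx) (by rw [hux]; exact le_of_lt hmneg)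
      linarith
    have hsum0 : ∑ w ∈ G.neighborFinset x, (u w - u x) = 0 :=
      le_antisymm hsumle (Finset.sum_nonneg hterm)
    have hall0 := (Finset.sum_eq_zero_iff_of_nonneg hterm).mp hsum0
    have hyN : y ∈ G.neighborFinset x := (SimpleGraph.mem_neighborFinset _ _ _).mpr hxy
    have huy : u y = m := by have := hall0 y hyN; rw [hux] at this; linarith
    refine ⟨?_, huy⟩
    rcases hΩbd y hxy with h | h
    · exact h
    · exfalso; have := hb y h; rw [huy] at this; linarith
  -- propagate along the connected set Ω
  have hall : ∀ y ∈ Ω, u y = m := by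
    intro y hy
    obtain ⟨w⟩ := hΩconn ⟨z, hzΩ⟩ ⟨y, hy⟩
    have hstep : ∀ {a b : Ω} (_ : (G.induce Ω).Walk a b), u a = m → u b = m := by
      intro a b w
      induction w with
      | nil => exact id
      | cons hadj w ih =>
        intro ha
        rename_i a a' b
        have hadj' : G.Adj (a : V) (a' : V) := hadj
        exact ih ((key a a.2 ha a' hadj').2)
    exact hstep w rfl
  -- derive contradiction
  rcases hne with ⟨y, hy⟩ | hinf
  · obtain ⟨hyΩ, x, hxΩ, hxy⟩ := hbd ▸ hy
    exact hyΩ (key x hxΩ (hall x hxΩ) y hxy).1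
  · obtain ⟨N', hN'⟩ := hliminf (-m / 2) (by linarith)
    obtain ⟨x, hxΩ, hxball⟩ := hinf.exists_notMem_finite (ball_finite G x₀ N')
    have hdx : N' ≤ G.dist x₀ x := by
      by_contra h
      exact hxball ⟨hconn x₀ x, by omega⟩
    have := hN' x hxΩ hdx
    rw [hall x hxΩ] at this
    linarith
end

section
/- Under the hypotheses of the discrete maximum principle (u : Ω ∪ δΩ → ℝ with -Δu + cu ≥ 0 on connected Ω, u ≥ 0 on δΩ, liminf at infinity ≥ 0, c ≥ 0), either u ≡ 0 on Ω or u > 0 on Ω. -/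
open SimpleGraph

/-- Balls in a locally finite connected graph are finite. -/
lemma ball_finite_aux {V : Type*} (G : SimpleGraph V)
    [∀ v : V, Fintype (G.neighborSet v)] (hconn : G.Connected) (x₀ : V) :
    ∀ N : ℕ, {x : V | G.dist x₀ x ≤ N}.Finite := by
  intro N
  induction N with
  | zero =>
    apply Set.Finite.subset (Set.finite_singleton x₀)
    intro x hx
    simp only [Set.mem_setOf_eq, Nat.le_zero] at hx
    have := (hconn.dist_eq_zero_iff).mp hx
    simp [this]
  | succ N ih =>
    have hfin : ({x : V | G.dist x₀ x ≤ N} ∪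
        ⋃ y ∈ {x : V | G.dist x₀ x ≤ N}, (G.neighborSet y)).Finite :=
      ih.union (ih.biUnion fun y _ => (G.neighborSet y).toFinite)
    apply hfin.subset
    intro x hx
    simp only [Set.mem_setOf_eq] at hx
    by_cases h : G.dist x₀ x ≤ N
    · exact Or.inl h
    · right
      have hd : G.dist x₀ x = N + 1 := le_antisymm hx (by omega)
      obtain ⟨p, hp⟩ := (hconn x₀ x).exists_walk_length_eq_dist
      have hq : p.reverse.length = N + 1 := by
        rw [SimpleGraph.Walk.length_reverse, hp, hd]
      have key : ∀ (a : V) (q : G.Walk a x₀), q.length = N + 1 →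
          ∃ z, G.dist x₀ z ≤ N ∧ G.Adj z a := by
        intro a q hql
        cases q with
        | nil => simp at hql
        | cons hadj q' =>
          refine ⟨_, ?_, hadj.symm⟩
          have := G.dist_le q'.reverse
          simp only [SimpleGraph.Walk.length_reverse] at this
          have hlen : q'.length = N := by
            simpa using hql
          omega
      obtain ⟨z, hz, hadj⟩ := key x p.reverse hq
      exact Set.mem_biUnion hz hadj

/-- Propagation along the connected induced subgraph. -/
lemma propagate_aux {V : Type*} {G : SimpleGraph V} {Ω : Set V}
    (hΩconn : (G.induce Ω).Connected) (S : Set V)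
    (hstep : ∀ z ∈ Ω, z ∈ S → ∀ w ∈ Ω, G.Adj z w → w ∈ S)
    {a : V} (ha : a ∈ Ω) (haS : a ∈ S) : ∀ b ∈ Ω, b ∈ S := by
  have key : ∀ (s t : ↥Ω) (_ : (G.induce Ω).Walk s t), (s : V) ∈ S → (t : V) ∈ S := by
    intro s t p
    induction p with
    | nil => exact id
    | @cons x y z h p ih =>
      intro hx
      have hadj : G.Adj (x : V) (y : V) := h
      exact ih (hstep x x.2 hx y y.2 hadj)
  intro b hb
  obtain ⟨w⟩ := hΩconn ⟨a, ha⟩ ⟨b, hb⟩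
  exact key _ _ w haS

/-- Discrete maximum principle on a locally finite connected graph. -/
theorem discrete_strong_maximum_principle {V : Type*} (G : SimpleGraph V)
    [∀ v : V, Fintype (G.neighborSet v)]
    (hconn : G.Connected)
    (Ω : Set V)
    (hΩconn : (G.induce Ω).Connected)
    (bd : Set V)
    (hbd : bd = {y | y ∉ Ω ∧ ∃ x ∈ Ω, G.Adj x y})
    (hne : bd.Nonempty ∨ Ω.Infinite)
    (c u : V → ℝ)
    (hc : ∀ x ∈ Ω, 0 ≤ c x)
    (heq : ∀ x ∈ Ω, 0 ≤ -(∑ y ∈ G.neighborFinset x, (u y - u x)) + c x * u x)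
    (hb : ∀ y ∈ bd, 0 ≤ u y)
    (x₀ : V)
    (hliminf : ∀ ε : ℝ, 0 < ε → ∃ N : ℕ, ∀ x ∈ Ω, N ≤ G.dist x₀ x → -ε ≤ u x) :
    (∀ x ∈ Ω, u x = 0) ∨ (∀ x ∈ Ω, 0 < u x) := by
  classical
  -- any neighbor of a point of Ω is in Ω or in bd
  have hnbr : ∀ z ∈ Ω, ∀ w, G.Adj z w → w ∈ Ω ∨ w ∈ bd := by
    intro z hz w hw
    by_cases h : w ∈ Ω
    · exact Or.inl h
    · exact Or.inr (by rw [hbd]; exact ⟨h, z, hz, hw⟩)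
  -- Step A: u ≥ 0 on Ω
  have hnonneg : ∀ x ∈ Ω, 0 ≤ u x := by
    by_contra hcon
    push_neg at hcon
    obtain ⟨x, hx, hux⟩ := hcon
    set ε : ℝ := -u x / 2 with hε
    have hεpos : 0 < ε := by simp [hε]; linarith
    obtain ⟨N, hN⟩ := hliminf ε hεpos
    -- x is inside the ball of radius N
    have hxball : G.dist x₀ x ≤ N := by
      by_contra h
      push_neg at h
      have := hN x hx (le_of_lt h)
      simp only [hε] at this
      linarith
    -- minimizer over Ω ∩ ball
    have hAfin : ({z | z ∈ Ω ∧ G.dist x₀ z ≤ N}).Finite :=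
      (ball_finite_aux G hconn x₀ N).subset (fun z hz => hz.2)
    have hAne : hAfin.toFinset.Nonempty := ⟨x, by simp [hx, hxball]⟩
    obtain ⟨y, hyA, hymin⟩ := Finset.exists_min_image hAfin.toFinset u hAne
    simp only [Set.Finite.mem_toFinset, Set.mem_setOf_eq] at hyA
    have hymin' : ∀ b ∈ Ω, G.dist x₀ b ≤ N → u y ≤ u b := by
      intro b hb1 hb2
      exact hymin b (by simp [hb1, hb2])
    have hyx : u y ≤ u x := hymin' x hx hxball
    have hyneg : u y < 0 := lt_of_le_of_lt hyx hux
    have hyε : u y < -ε := by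
      have : u x = -2 * ε := by simp [hε]; ring
      linarith
    -- global lower bound on Ω
    have hglob : ∀ w ∈ Ω, u y ≤ u w := by
      intro w hw
      by_cases h : G.dist x₀ w ≤ N
      · exact hymin' w hw h
      · push_neg at h
        have := hN w hw (le_of_lt h)
        linarith
    -- at any point of Ω where the min is attained, all neighbors attain it too
    have hall : ∀ z ∈ Ω, u z = u y → ∀ w ∈ G.neighborFinset z, u w = u z := by
      intro z hz hzy
      have hterm : ∀ w ∈ G.neighborFinset z, 0 ≤ u w - u z := by
        intro w hw
        rw [SimpleGraph.mem_neighborFinset] at hw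
        rcases hnbr z hz w hw with h | h
        · have := hglob w h; linarith [hzy ▸ this]
        · have := hb w h; linarith [hzy, hyneg]
      have hsumnn : 0 ≤ ∑ w ∈ G.neighborFinset z, (u w - u z) :=
        Finset.sum_nonneg hterm
      have hczuz : c z * u z ≤ 0 := by
        apply mul_nonpos_of_nonneg_of_nonpos (hc z hz)
        rw [hzy]; linarith
      have hheq := heq z hz
      have hsum0 : ∑ w ∈ G.neighborFinset z, (u w - u z) = 0 := by linarith
      have := (Finset.sum_eq_zero_iff_of_nonneg hterm).mp hsum0
      intro w hw
      have := this w hw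
      linarith
    -- propagate: u = u y on all of Ω
    have hS : ∀ b ∈ Ω, u b = u y := by
      apply propagate_aux hΩconn {z | u z = u y}
      · intro z hz hzS w hw hadj
        have := hall z hz hzS w (by rwa [SimpleGraph.mem_neighborFinset])
        simp only [Set.mem_setOf_eq] at hzS ⊢
        rw [this, hzS]
      · exact hyA.1
      · rfl
    -- derive contradiction from hne
    rcases hne with ⟨y', hy'⟩ | hinf
    · -- boundary point y' has a neighbor x' ∈ Ω
      have hy'2 := hy'
      rw [hbd] at hy'2
      obtain ⟨hy'notΩ, x', hx'Ω, hadj⟩ := hy'2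
      have : u y' = u x' := hall x' hx'Ω (hS x' hx'Ω) y'
        (by rwa [SimpleGraph.mem_neighborFinset])
      have h1 := hb y' hy'
      have h2 := hS x' hx'Ω
      rw [this, h2] at h1
      linarith
    · -- Ω infinite but Ω ⊆ ball N
      have : Ω ⊆ {z | G.dist x₀ z ≤ N} := by
        intro z hz
        by_contra h
        simp only [Set.mem_setOf_eq, not_le] at h
        have := hN z hz (le_of_lt h)
        have := hS z hz
        linarith
      exact hinf ((ball_finite_aux G hconn x₀ N).subset this)
  -- Step B: dichotomy
  by_cases hzero : ∃ x ∈ Ω, u x = 0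
  · left
    obtain ⟨x, hx, hux⟩ := hzero
    have hall : ∀ z ∈ Ω, u z = 0 → ∀ w ∈ G.neighborFinset z, u w = 0 := by
      intro z hz hz0
      have hterm : ∀ w ∈ G.neighborFinset z, 0 ≤ u w - u z := by
        intro w hw
        rw [SimpleGraph.mem_neighborFinset] at hw
        rcases hnbr z hz w hw with h | h
        · have := hnonneg w h; linarith [hz0]
        · have := hb w h; linarith [hz0]
      have hsumnn : 0 ≤ ∑ w ∈ G.neighborFinset z, (u w - u z) :=
        Finset.sum_nonneg hterm
      have hheq := heq z hz
      have hczuz : c z * u z = 0 := by rw [hz0]; ring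
      have hsum0 : ∑ w ∈ G.neighborFinset z, (u w - u z) = 0 := by linarith
      have := (Finset.sum_eq_zero_iff_of_nonneg hterm).mp hsum0
      intro w hw
      have := this w hw
      linarith [hz0]
    apply propagate_aux hΩconn {z | u z = 0}
    · intro z hz hzS w hw hadj
      exact hall z hz hzS w (by rwa [SimpleGraph.mem_neighborFinset])
    · exact hx
    · exact hux
  · right
    push_neg at hzero
    intro z hz
    exact lt_of_le_of_ne (hnonneg z hz) (Ne.symm (hzero z hz))
end

section
/- Let u : ℤ² → ℝ satisfy Δu(x) ≤ 0 for all x ∈ ℤ² and u ≥ 0 on ℤ². Then u is constant. -/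
open Finset

noncomputable def Pk (f : ℤ × ℤ → ℝ) (x : ℤ × ℤ) : ℝ :=
  (f (x.1 + 1, x.2) + f (x.1 - 1, x.2) + f (x.1, x.2 + 1) + f (x.1, x.2 - 1)) / 4

noncomputable def Qk (g : ℤ → ℝ) (a : ℤ) : ℝ := (g (a + 1) + g (a - 1)) / 2

def bcoef (n : ℕ) (a : ℤ) : ℕ :=
  if 0 ≤ (n : ℤ) + a ∧ Even ((n : ℤ) + a) then n.choose (((n : ℤ) + a).toNat / 2) else 0

noncomputable def gk (n : ℕ) (a : ℤ) : ℝ := (bcoef n a : ℝ) / 2 ^ n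

lemma bcoef_pascal (n : ℕ) (a : ℤ) :
    bcoef (n + 1) a = bcoef n (a + 1) + bcoef n (a - 1) := by
  simp only [bcoef, Int.even_iff]
  split_ifs with h1 h2 h3 h4 h5 h6 h7
  all_goals try omega
  · -- all guards true
    obtain ⟨m, hm⟩ : ∃ m : ℕ, ((n : ℤ) + 1 + a) = 2 * ((m : ℤ) + 1) := by
      refine ⟨((((n : ℤ) + 1 + a) / 2) - 1).toNat, by omega⟩
    have e0 : ((((n : ℕ) + 1 : ℕ) : ℤ) + a).toNat / 2 = m + 1 := by push_cast; omega
    have e1 : (((n : ℤ) + (a + 1)).toNat / 2) = m + 1 := by omega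
    have e2 : (((n : ℤ) + (a - 1)).toNat / 2) = m := by omega
    rw [e0, e1, e2, Nat.choose_succ_succ, Nat.add_comm]
  · -- boundary: n+1+a = 0
    have e0 : ((((n : ℕ) + 1 : ℕ) : ℤ) + a).toNat / 2 = 0 := by push_cast; omega
    have e1 : (((n : ℤ) + (a + 1)).toNat / 2) = 0 := by omega
    rw [e0, e1]
    simp

lemma Qk_gk (n : ℕ) : Qk (gk n) = gk (n + 1) := by
  funext a
  simp only [Qk, gk, bcoef_pascal n a, pow_succ]
  push_cast
  field_simp
  try ring

lemma Qk_iter (n : ℕ) : Qk^[n] (gk 0) = gk n := by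
  induction n with
  | zero => rfl
  | succ k ih => rw [Function.iterate_succ_apply', ih, Qk_gk]

lemma gk_nonneg (n : ℕ) (a : ℤ) : 0 ≤ gk n a := by
  unfold gk; positivity

lemma gk_zero (a : ℤ) : gk 0 a = if a = 0 then 1 else 0 := by
  simp only [gk, bcoef, Nat.cast_zero, pow_zero, zero_add]
  split_ifs with h1 h2 h3
  · simp [h2]
  · obtain ⟨m, hm⟩ := h1.2
    rw [Nat.choose_eq_zero_of_lt (by omega : 0 < a.toNat / 2)]
    simp
  · exfalso; exact h1 ⟨by omega, by simp [h3]⟩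
  · simp

lemma gk_two_mul (k : ℕ) : gk (2 * k) 0 = (Nat.centralBinom k : ℝ) / 4 ^ k := by
  unfold gk bcoef Nat.centralBinom
  rw [if_pos ⟨by omega, by exact ⟨k, by push_cast; ring⟩⟩]
  have h : (((2 * k : ℕ) : ℤ) + 0).toNat / 2 = k := by omega
  rw [h]
  have h2 : ((2 : ℝ) ^ (2 * k)) = 4 ^ k := by
    rw [pow_mul]; norm_num
  rw [h2]

lemma centralBinom_lb (k : ℕ) : 16 ^ (k + 1) ≤ 4 * (k + 1) * Nat.centralBinom (k + 1) ^ 2 := by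
  induction k with
  | zero => norm_num [Nat.centralBinom]
  | succ k ih =>
    have hrec : (k + 2) * Nat.centralBinom (k + 2) = 2 * (2 * (k + 1) + 1) * Nat.centralBinom (k + 1) :=
      Nat.succ_mul_centralBinom_succ (k + 1)
    have key : (k + 2) * (16 ^ (k + 2)) ≤ (k + 2) * (4 * (k + 2) * Nat.centralBinom (k + 2) ^ 2) := by
      have h2 : (k + 2) * (4 * (k + 2) * Nat.centralBinom (k + 2) ^ 2) =
          4 * ((k + 2) * Nat.centralBinom (k + 2)) ^ 2 := by ring
      rw [h2, hrec]
      have h3 : 4 * (2 * (2 * (k + 1) + 1) * Nat.centralBinom (k + 1)) ^ 2 =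
          (16 * (2 * (k + 1) + 1) ^ 2) * Nat.centralBinom (k + 1) ^ 2 := by ring
      have h4 : (k + 2) * 16 ^ (k + 2) = (16 * (k + 2)) * 16 ^ (k + 1) := by ring
      rw [h3, h4]
      calc (16 * (k + 2)) * 16 ^ (k + 1)
          ≤ (16 * (k + 2)) * (4 * (k + 1) * Nat.centralBinom (k + 1) ^ 2) :=
            Nat.mul_le_mul_left _ ih
        _ = (64 * (k + 2) * (k + 1)) * Nat.centralBinom (k + 1) ^ 2 := by ring
        _ ≤ (16 * (2 * (k + 1) + 1) ^ 2) * Nat.centralBinom (k + 1) ^ 2 :=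
            Nat.mul_le_mul_right _ (by nlinarith)
    exact Nat.le_of_mul_le_mul_left key (by omega)

lemma gk_sq_lb (k : ℕ) : (1 : ℝ) / (4 * (k + 1)) ≤ gk (2 * (k + 1)) 0 ^ 2 := by
  rw [gk_two_mul, div_pow]
  have h' : (16 : ℝ) ^ (k + 1) ≤ 4 * ((k : ℝ) + 1) * (Nat.centralBinom (k + 1) : ℝ) ^ 2 := by
    have := centralBinom_lb k
    exact_mod_cast this
  have e : ((4 : ℝ) ^ (k + 1)) ^ 2 = 16 ^ (k + 1) := by
    rw [← pow_mul, mul_comm (k + 1) 2, pow_mul]; norm_num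
  rw [div_le_div_iff₀ (by positivity) (by positivity), e]
  nlinarith [h']

noncomputable def Dfun : ℤ × ℤ → ℝ := fun x => gk 0 (x.1 + x.2) * gk 0 (x.1 - x.2)

lemma Pk_mono {f g : ℤ × ℤ → ℝ} (h : ∀ y, f y ≤ g y) (x : ℤ × ℤ) : Pk f x ≤ Pk g x := by
  unfold Pk
  have := h (x.1 + 1, x.2); have := h (x.1 - 1, x.2)
  have := h (x.1, x.2 + 1); have := h (x.1, x.2 - 1)
  linarith

lemma Pk_iter_mono {f g : ℤ × ℤ → ℝ} (h : ∀ y, f y ≤ g y) (n : ℕ) (x : ℤ × ℤ) :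
    Pk^[n] f x ≤ Pk^[n] g x := by
  induction n generalizing x with
  | zero => exact h x
  | succ k ih =>
    rw [Function.iterate_succ_apply', Function.iterate_succ_apply']
    exact Pk_mono ih x

lemma Pk_iter_nonneg {f : ℤ × ℤ → ℝ} (h : ∀ y, 0 ≤ f y) (n : ℕ) (x : ℤ × ℤ) :
    0 ≤ Pk^[n] f x := by
  induction n generalizing x with
  | zero => exact h x
  | succ k ih =>
    rw [Function.iterate_succ_apply']
    show 0 ≤ (Pk^[k] f (x.1 + 1, x.2) + Pk^[k] f (x.1 - 1, x.2) + Pk^[k] f (x.1, x.2 + 1) +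
      Pk^[k] f (x.1, x.2 - 1)) / 4
    have := ih (x.1 + 1, x.2); have := ih (x.1 - 1, x.2)
    have := ih (x.1, x.2 + 1); have := ih (x.1, x.2 - 1)
    linarith

lemma Pk_prod (g h : ℤ → ℝ) :
    Pk (fun y => g (y.1 + y.2) * h (y.1 - y.2)) =
      fun x => Qk g (x.1 + x.2) * Qk h (x.1 - x.2) := by
  funext x
  simp only [Pk, Qk]
  have e1 : x.1 + 1 + x.2 = x.1 + x.2 + 1 := by ring
  have e2 : x.1 + 1 - x.2 = x.1 - x.2 + 1 := by ring
  have e3 : x.1 - 1 + x.2 = x.1 + x.2 - 1 := by ring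
  have e4 : x.1 - 1 - x.2 = x.1 - x.2 - 1 := by ring
  have e5 : x.1 + (x.2 + 1) = x.1 + x.2 + 1 := by ring
  have e6 : x.1 - (x.2 + 1) = x.1 - x.2 - 1 := by ring
  have e7 : x.1 + (x.2 - 1) = x.1 + x.2 - 1 := by ring
  have e8 : x.1 - (x.2 - 1) = x.1 - x.2 + 1 := by ring
  rw [e1, e2, e3, e4, e5, e6, e7, e8]
  ring

lemma Pk_iter_Dfun (n : ℕ) :
    Pk^[n] Dfun = fun x => gk n (x.1 + x.2) * gk n (x.1 - x.2) := by
  induction n with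
  | zero => rfl
  | succ k ih =>
    rw [Function.iterate_succ_apply', ih, Pk_prod, Qk_gk]

lemma Pk_shift (f : ℤ × ℤ → ℝ) (t : ℤ × ℤ) (n : ℕ) :
    Pk^[n] (fun y => f (y.1 - t.1, y.2 - t.2)) = fun x => Pk^[n] f (x.1 - t.1, x.2 - t.2) := by
  induction n with
  | zero => rfl
  | succ k ih =>
    rw [Function.iterate_succ_apply', Function.iterate_succ_apply', ih]
    funext x
    simp only [Pk]
    have e1 : x.1 + 1 - t.1 = x.1 - t.1 + 1 := by ring
    have e2 : x.1 - 1 - t.1 = x.1 - t.1 - 1 := by ring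
    have e3 : x.2 + 1 - t.2 = x.2 - t.2 + 1 := by ring
    have e4 : x.2 - 1 - t.2 = x.2 - t.2 - 1 := by ring
    rw [e1, e2, e3, e4]

lemma Pk_smul (c : ℝ) (f : ℤ × ℤ → ℝ) (n : ℕ) :
    Pk^[n] (fun y => c * f y) = fun x => c * Pk^[n] f x := by
  induction n with
  | zero => rfl
  | succ k ih =>
    rw [Function.iterate_succ_apply', Function.iterate_succ_apply', ih]
    funext x
    simp only [Pk]
    ring

lemma Pk_sum (s : Finset ℕ) (F : ℕ → ℤ × ℤ → ℝ) (x : ℤ × ℤ) :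
    Pk (fun y => ∑ j ∈ s, F j y) x = ∑ j ∈ s, Pk (F j) x := by
  simp only [Pk]
  rw [← Finset.sum_add_distrib, ← Finset.sum_add_distrib, ← Finset.sum_add_distrib,
    Finset.sum_div]

lemma potential_zero (v μ : ℤ × ℤ → ℝ) (hv0 : ∀ x, 0 ≤ v x) (hμ0 : ∀ x, 0 ≤ μ x)
    (heq : ∀ x, v x = Pk v x + μ x) (x0 : ℤ × ℤ) : μ x0 = 0 := by
  by_contra hne
  have hμpos : 0 < μ x0 := lt_of_le_of_ne (hμ0 x0) (Ne.symm hne)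
  -- partial sums of iterates are bounded by v
  have hS : ∀ n, ∀ x, ∑ j ∈ Finset.range n, Pk^[j] μ x ≤ v x := by
    intro n
    induction n with
    | zero => intro x; simpa using hv0 x
    | succ k ih =>
      intro x
      have hsum : ∑ j ∈ Finset.range (k + 1), Pk^[j] μ x
          = μ x + Pk (fun y => ∑ j ∈ Finset.range k, Pk^[j] μ y) x := by
        rw [Pk_sum, Finset.sum_range_succ']
        simp only [Function.iterate_zero_apply]
        rw [add_comm]
        congr 1
        apply Finset.sum_congr rfl
        intro j _
        rw [Function.iterate_succ_apply']
      rw [hsum]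
      have hmono := Pk_mono ih x
      have := heq x
      linarith
  -- pointwise lower bound for the iterates at x0
  have hlow : ∀ j : ℕ, μ x0 * (gk j 0 * gk j 0) ≤ Pk^[j] μ x0 := by
    intro j
    have hFle : ∀ y, μ x0 * Dfun (y.1 - x0.1, y.2 - x0.2) ≤ μ y := by
      intro y
      by_cases hy : y = x0
      · subst hy
        simp [Dfun, gk_zero]
      · have hD : Dfun (y.1 - x0.1, y.2 - x0.2) = 0 := by
          simp only [Dfun, gk_zero]
          have : ¬(y.1 - x0.1 + (y.2 - x0.2) = 0 ∧ y.1 - x0.1 - (y.2 - x0.2) = 0) := by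
            intro ⟨h1, h2⟩
            apply hy
            have e1 : y.1 = x0.1 := by omega
            have e2 : y.2 = x0.2 := by omega
            exact Prod.ext e1 e2
          rcases not_and_or.mp this with h | h
          · rw [if_neg h, zero_mul]
          · rw [if_neg h, mul_zero]
        rw [hD, mul_zero]
        exact hμ0 y
    have h1 : Pk^[j] (fun y => μ x0 * Dfun (y.1 - x0.1, y.2 - x0.2)) x0 ≤ Pk^[j] μ x0 :=
      Pk_iter_mono hFle j x0
    have e : Pk^[j] (fun y => μ x0 * Dfun (y.1 - x0.1, y.2 - x0.2)) x0
        = μ x0 * (gk j 0 * gk j 0) := by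
      rw [Pk_smul (μ x0) (fun y => Dfun (y.1 - x0.1, y.2 - x0.2)) j]
      simp only
      rw [Pk_shift Dfun x0 j, Pk_iter_Dfun]
      simp
    rw [e] at h1
    exact h1
  -- choose K with large harmonic sum
  obtain ⟨K, hK⟩ : ∃ K : ℕ, 4 * v x0 / μ x0 < ∑ k ∈ Finset.range K, (1 / ((k : ℝ) + 1)) := by
    rcases (Real.tendsto_sum_range_one_div_nat_succ_atTop.eventually_gt_atTop
      (4 * v x0 / μ x0)).exists with ⟨K, hK⟩
    exact ⟨K, hK⟩
  -- chain of estimates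
  have himg : ∑ k ∈ Finset.range K, Pk^[2 * (k + 1)] μ x0
      = ∑ j ∈ (Finset.range K).image (fun k => 2 * (k + 1)), Pk^[j] μ x0 := by
    rw [Finset.sum_image (by intro a _ b _ hab; beta_reduce at hab; omega)]
  have hsub : (Finset.range K).image (fun k => 2 * (k + 1)) ⊆ Finset.range (2 * K + 2) := by
    intro j hj
    simp only [Finset.mem_image, Finset.mem_range] at hj ⊢
    obtain ⟨k, hk, rfl⟩ := hj
    omega
  have h1 : ∑ k ∈ Finset.range K, Pk^[2 * (k + 1)] μ x0
      ≤ ∑ j ∈ Finset.range (2 * K + 2), Pk^[j] μ x0 := by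
    rw [himg]
    exact Finset.sum_le_sum_of_subset_of_nonneg hsub
      (fun j _ _ => Pk_iter_nonneg hμ0 j x0)
  have h2 : ∑ k ∈ Finset.range K, (μ x0 / 4) * (1 / ((k : ℝ) + 1))
      ≤ ∑ k ∈ Finset.range K, Pk^[2 * (k + 1)] μ x0 := by
    apply Finset.sum_le_sum
    intro k _
    have hg := gk_sq_lb k
    have hl := hlow (2 * (k + 1))
    have hgsq : gk (2 * (k + 1)) 0 ^ 2 = gk (2 * (k + 1)) 0 * gk (2 * (k + 1)) 0 := sq (gk (2 * (k + 1)) 0) ▸ rfl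
    have : μ x0 * (1 / (4 * ((k : ℝ) + 1))) ≤ μ x0 * (gk (2 * (k + 1)) 0 * gk (2 * (k + 1)) 0) := by
      apply mul_le_mul_of_nonneg_left _ hμpos.le
      rw [← pow_two]
      exact hg
    have hk0 : ((k : ℝ) + 1) ≠ 0 := by positivity
    calc (μ x0 / 4) * (1 / ((k : ℝ) + 1)) = μ x0 * (1 / (4 * ((k : ℝ) + 1))) := by
          field_simp
      _ ≤ μ x0 * (gk (2 * (k + 1)) 0 * gk (2 * (k + 1)) 0) := this
      _ ≤ Pk^[2 * (k + 1)] μ x0 := hl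
  have h3 : (μ x0 / 4) * ∑ k ∈ Finset.range K, (1 / ((k : ℝ) + 1)) ≤ v x0 := by
    rw [Finset.mul_sum]
    calc ∑ k ∈ Finset.range K, (μ x0 / 4) * (1 / ((k : ℝ) + 1))
        ≤ ∑ k ∈ Finset.range K, Pk^[2 * (k + 1)] μ x0 := h2
      _ ≤ ∑ j ∈ Finset.range (2 * K + 2), Pk^[j] μ x0 := h1
      _ ≤ v x0 := hS (2 * K + 2) x0
  have hmul := mul_lt_mul_of_pos_left hK (show (0 : ℝ) < μ x0 / 4 by positivity)
  have heqv : (μ x0 / 4) * (4 * v x0 / μ x0) = v x0 := by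
    field_simp
  linarith

lemma spread (S : ℤ × ℤ → Prop)
    (h : ∀ x, S x → S (x.1 + 1, x.2) ∧ S (x.1 - 1, x.2) ∧ S (x.1, x.2 + 1) ∧ S (x.1, x.2 - 1))
    (x0 : ℤ × ℤ) (h0 : S x0) (y : ℤ × ℤ) : S y := by
  have hrow : ∀ n : ℤ, S (x0.1 + n, x0.2) := by
    intro n
    induction n using Int.induction_on with
    | zero => simpa using h0
    | succ k ih =>
      have := (h _ ih).1
      rw [show x0.1 + ((k : ℤ) + 1) = x0.1 + k + 1 from by ring]
      exact this
    | pred k ih =>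
      have := (h _ ih).2.1
      rw [show x0.1 + (-(k : ℤ) - 1) = x0.1 + -(k : ℤ) - 1 from by ring]
      exact this
  have hcol : ∀ n m : ℤ, S (x0.1 + n, x0.2 + m) := by
    intro n m
    induction m using Int.induction_on with
    | zero => simpa using hrow n
    | succ k ih =>
      have := (h _ ih).2.2.1
      rw [show x0.2 + ((k : ℤ) + 1) = x0.2 + k + 1 from by ring]
      exact this
    | pred k ih =>
      have := (h _ ih).2.2.2
      rw [show x0.2 + (-(k : ℤ) - 1) = x0.2 + -(k : ℤ) - 1 from by ring]
      exact this
  have := hcol (y.1 - x0.1) (y.2 - x0.2)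
  simpa using this

/-- The lattice Laplacian on `ℤ²`: `Δu(x) = Σ_{y∼x}(u(y) - u(x))`. -/
def latticeLap (u : ℤ × ℤ → ℝ) (x : ℤ × ℤ) : ℝ :=
  (u (x.1 + 1, x.2) - u x) + (u (x.1 - 1, x.2) - u x) +
    (u (x.1, x.2 + 1) - u x) + (u (x.1, x.2 - 1) - u x)

/-- Nonnegative superharmonic functions on `ℤ²` are constant. -/
theorem superharmonic_nonneg_constant (u : ℤ × ℤ → ℝ)
    (hsuper : ∀ x, latticeLap u x ≤ 0) (hpos : ∀ x, 0 ≤ u x) :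
    ∃ a : ℝ, ∀ x, u x = a := by
  by_cases hz : ∃ x, u x = 0
  · obtain ⟨x0, h0⟩ := hz
    refine ⟨0, ?_⟩
    have hstep : ∀ x, u x = 0 →
        u (x.1 + 1, x.2) = 0 ∧ u (x.1 - 1, x.2) = 0 ∧ u (x.1, x.2 + 1) = 0 ∧ u (x.1, x.2 - 1) = 0 := by
      intro x hx
      have hs := hsuper x
      simp only [latticeLap, hx] at hs
      have h1 := hpos (x.1 + 1, x.2); have h2 := hpos (x.1 - 1, x.2)
      have h3 := hpos (x.1, x.2 + 1); have h4 := hpos (x.1, x.2 - 1)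
      exact ⟨by linarith, by linarith, by linarith, by linarith⟩
    exact spread (fun x => u x = 0) hstep x0 h0
  · push_neg at hz
    have hupos : ∀ x, 0 < u x := fun x => lt_of_le_of_ne (hpos x) (Ne.symm (hz x))
    set v : ℤ × ℤ → ℝ := fun x => Real.sqrt (u x) with hv
    have hv2 : ∀ x, v x ^ 2 = u x := fun x => Real.sq_sqrt (hpos x)
    have hvpos : ∀ x, 0 < v x := fun x => Real.sqrt_pos.mpr (hupos x)
    have hlap : ∀ x, latticeLap u x =
        ((v (x.1 + 1, x.2) - v x) ^ 2 + (v (x.1 - 1, x.2) - v x) ^ 2 +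
          (v (x.1, x.2 + 1) - v x) ^ 2 + (v (x.1, x.2 - 1) - v x) ^ 2)
        + 2 * v x * (v (x.1 + 1, x.2) + v (x.1 - 1, x.2) + v (x.1, x.2 + 1) + v (x.1, x.2 - 1)
            - 4 * v x) := by
      intro x
      simp only [latticeLap]
      rw [← hv2 x, ← hv2 (x.1 + 1, x.2), ← hv2 (x.1 - 1, x.2), ← hv2 (x.1, x.2 + 1),
        ← hv2 (x.1, x.2 - 1)]
      ring
    have hμ0 : ∀ x, 0 ≤ v x - Pk v x := by
      intro x
      have hs := hsuper x
      rw [hlap x] at hs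
      have hvp := hvpos x
      have s1 := sq_nonneg (v (x.1 + 1, x.2) - v x)
      have s2 := sq_nonneg (v (x.1 - 1, x.2) - v x)
      have s3 := sq_nonneg (v (x.1, x.2 + 1) - v x)
      have s4 := sq_nonneg (v (x.1, x.2 - 1) - v x)
      show 0 ≤ v x - (v (x.1 + 1, x.2) + v (x.1 - 1, x.2) + v (x.1, x.2 + 1) + v (x.1, x.2 - 1)) / 4
      nlinarith [hs, hvp, s1, s2, s3, s4]
    have hkey : ∀ x, v x - Pk v x = 0 := by
      intro x
      exact potential_zero v (fun y => v y - Pk v y) (fun y => (hvpos y).le) hμ0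
        (fun y => by ring) x
    have hall : ∀ x, v (x.1 + 1, x.2) = v x ∧ v (x.1 - 1, x.2) = v x ∧
        v (x.1, x.2 + 1) = v x ∧ v (x.1, x.2 - 1) = v x := by
      intro x
      have hs := hsuper x
      rw [hlap x] at hs
      have hk := hkey x
      have hsum : v (x.1 + 1, x.2) + v (x.1 - 1, x.2) + v (x.1, x.2 + 1) + v (x.1, x.2 - 1)
          - 4 * v x = 0 := by
        have : Pk v x =
            (v (x.1 + 1, x.2) + v (x.1 - 1, x.2) + v (x.1, x.2 + 1) + v (x.1, x.2 - 1)) / 4 := rfl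
        rw [this] at hk
        linarith
      have s1 := sq_nonneg (v (x.1 + 1, x.2) - v x)
      have s2 := sq_nonneg (v (x.1 - 1, x.2) - v x)
      have s3 := sq_nonneg (v (x.1, x.2 + 1) - v x)
      have s4 := sq_nonneg (v (x.1, x.2 - 1) - v x)
      have hz2 : 2 * v x * (v (x.1 + 1, x.2) + v (x.1 - 1, x.2) + v (x.1, x.2 + 1) +
          v (x.1, x.2 - 1) - 4 * v x) = 0 := mul_eq_zero_of_right _ hsum
      have e1 : (v (x.1 + 1, x.2) - v x) ^ 2 = 0 := by linarith
      have e2 : (v (x.1 - 1, x.2) - v x) ^ 2 = 0 := by linarith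
      have e3 : (v (x.1, x.2 + 1) - v x) ^ 2 = 0 := by linarith
      have e4 : (v (x.1, x.2 - 1) - v x) ^ 2 = 0 := by linarith
      refine ⟨?_, ?_, ?_, ?_⟩ <;>
        [skip; skip; skip; skip] <;>
        first
        | (have := pow_eq_zero_iff (n := 2) (by norm_num) |>.mp e1; linarith [this])
        | (have := pow_eq_zero_iff (n := 2) (by norm_num) |>.mp e2; linarith [this])
        | (have := pow_eq_zero_iff (n := 2) (by norm_num) |>.mp e3; linarith [this])
        | (have := pow_eq_zero_iff (n := 2) (by norm_num) |>.mp e4; linarith [this])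
    have hconst : ∀ x, v x = v (0, 0) := by
      intro x
      refine spread (fun y => v y = v (0, 0)) ?_ (0, 0) rfl x
      intro y hy
      obtain ⟨a1, a2, a3, a4⟩ := hall y
      exact ⟨a1.trans hy, a2.trans hy, a3.trans hy, a4.trans hy⟩
    refine ⟨v (0, 0) ^ 2, fun x => ?_⟩
    rw [← hv2 x, hconst x]
end

section
/- Let f ∈ ℓ^∞_m(ℤ²) with m > 2 satisfy Σ_{x∈ℤ²} f(x) = 0, and let τ ∈ (0, (m−2)/(m+1)). Then Φ₀ ∗ f ∈ ℓ^∞_τ(ℤ²) with ‖Φ₀ ∗ f‖_{ℓ^∞_τ} ≤ (c₀^m/(m−2)⁴)(1/(m−2−τ(m+1)))^{1/(m+1)} ‖f‖_{ℓ^∞_m}, where c₀ is the universal constant from the pointwise estimate |(Φ₀∗f)(x)| ≤ (c₀^m/(m−2)⁴)‖f‖_{ℓ^∞_m}(e+|x|)^{(2−m)/(m+1)}(ln(e+|x|))^{1/(m+1)}. -/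
noncomputable def latticeNorm (x : ℤ × ℤ) : ℝ :=
  Real.sqrt ((x.1 : ℝ) ^ 2 + (x.2 : ℝ) ^ 2)

/-- Weighted-norm estimate for `Φ₀ ∗ f`: if the pointwise estimate
`|(Φ₀∗f)(x)| ≤ (c₀^m/(m-2)⁴) N (e+|x|)^{(2-m)/(m+1)} (ln(e+|x|))^{1/(m+1)}`
holds, then for `τ ∈ (0,(m-2)/(m+1))`,
`‖Φ₀∗f‖_{ℓ^∞_τ} ≤ (c₀^m/(m-2)⁴)(1/(m-2-τ(m+1)))^{1/(m+1)} N`. -/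
theorem green_convolution_weighted_estimate (Φ₀ f : ℤ × ℤ → ℝ)
    (m τ c₀ N : ℝ) (hm : 2 < m) (hτ₀ : 0 < τ) (hτ₁ : τ < (m - 2) / (m + 1))
    (hc₀ : 1 < c₀) (hN : 0 ≤ N)
    (hnorm : ∀ x, |f x| * (1 + latticeNorm x) ^ m ≤ N)
    (hzero : HasSum f 0)
    (hpointwise : ∀ x : ℤ × ℤ,
      |∑' y : ℤ × ℤ, Φ₀ (y - x) * f y| ≤
        (c₀ ^ m / (m - 2) ^ 4) * N *
          (Real.exp 1 + latticeNorm x) ^ ((2 - m) / (m + 1)) *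
          (Real.log (Real.exp 1 + latticeNorm x)) ^ (1 / (m + 1))) :
    ∀ x : ℤ × ℤ,
      |∑' y : ℤ × ℤ, Φ₀ (y - x) * f y| * (1 + latticeNorm x) ^ τ ≤
        (c₀ ^ m / (m - 2) ^ 4) * (1 / (m - 2 - τ * (m + 1))) ^ (1 / (m + 1)) * N := by
  intro x
  have hr : 0 ≤ latticeNorm x := Real.sqrt_nonneg _
  set r := latticeNorm x with hrdef
  have hm1 : (0:ℝ) < m + 1 := by linarith
  have hγ : 0 < m - 2 - τ * (m + 1) := by
    have h := (lt_div_iff₀ hm1).mp hτ₁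
    linarith
  set γ := m - 2 - τ * (m + 1) with hγdef
  have he1 : (1:ℝ) < Real.exp 1 := by
    have := Real.add_one_le_exp (1:ℝ); linarith
  set a := Real.exp 1 + r with hadef
  have ha1 : 1 < a := by dsimp [a]; linarith
  have ha0 : 0 < a := by linarith
  have hla : 0 < Real.log a := Real.log_pos ha1
  have hC : 0 ≤ c₀ ^ m / (m - 2) ^ 4 := by
    apply div_nonneg
    · exact (Real.rpow_nonneg (by linarith) m)
    · positivity
  -- key inequality: a^{-γ} * log a ≤ 1/γ
  have hkey : a ^ (-γ) * Real.log a ≤ 1 / γ := by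
    have hag : 0 < a ^ γ := Real.rpow_pos_of_pos ha0 γ
    have h1 : γ * Real.log a ≤ a ^ γ := by
      have := Real.log_le_sub_one_of_pos hag
      rw [Real.log_rpow ha0] at this
      linarith
    rw [Real.rpow_neg ha0.le, inv_mul_le_iff₀ hag, mul_one_div, le_div_iff₀ hγ]
    nlinarith [h1]
  -- the weight bound
  have hw : a ^ ((2 - m) / (m + 1)) * Real.log a ^ (1 / (m + 1)) * (1 + r) ^ τ
      ≤ (1 / γ) ^ (1 / (m + 1)) := by
    have h2 : (1 + r) ^ τ ≤ a ^ τ :=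
      Real.rpow_le_rpow (by linarith) (by dsimp [a]; linarith) hτ₀.le
    have h3 : a ^ ((2 - m) / (m + 1)) * Real.log a ^ (1 / (m + 1)) * (1 + r) ^ τ
        ≤ a ^ ((2 - m) / (m + 1)) * Real.log a ^ (1 / (m + 1)) * a ^ τ := by
      apply mul_le_mul_of_nonneg_left h2
      positivity
    refine h3.trans ?_
    have h4 : a ^ ((2 - m) / (m + 1)) * Real.log a ^ (1 / (m + 1)) * a ^ τ
        = (a ^ (-γ) * Real.log a) ^ (1 / (m + 1)) := by
      rw [Real.mul_rpow (Real.rpow_nonneg ha0.le _) hla.le, ← Real.rpow_mul ha0.le]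
      rw [show -γ * (1 / (m + 1)) = (2 - m) / (m + 1) + τ by
        rw [hγdef]; field_simp; ring]
      rw [Real.rpow_add ha0]
      ring
    rw [h4]
    exact Real.rpow_le_rpow (by positivity) hkey (by positivity)
  calc |∑' y : ℤ × ℤ, Φ₀ (y - x) * f y| * (1 + r) ^ τ
      ≤ (c₀ ^ m / (m - 2) ^ 4) * N * a ^ ((2 - m) / (m + 1)) *
          Real.log a ^ (1 / (m + 1)) * (1 + r) ^ τ := by
        apply mul_le_mul_of_nonneg_right (hpointwise x)
        positivity
    _ = (c₀ ^ m / (m - 2) ^ 4) * N *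
          (a ^ ((2 - m) / (m + 1)) * Real.log a ^ (1 / (m + 1)) * (1 + r) ^ τ) := by
        ring
    _ ≤ (c₀ ^ m / (m - 2) ^ 4) * N * ((1 / γ) ^ (1 / (m + 1))) := by
        apply mul_le_mul_of_nonneg_left hw
        exact mul_nonneg hC hN
    _ = (c₀ ^ m / (m - 2) ^ 4) * (1 / γ) ^ (1 / (m + 1)) * N := by ring
end

section
/- Let K, g : ℤ² → ℝ with K ≥ 0, K ≢ 0, Σ_{x} g(x) converges with Σ_x g(x) > 0, and suppose g(x) ≤ C₀ K(x) for all x and some constant C₀. Let κ > 0 and suppose u₁, u₂ : ℤ² → ℝ are two solutions of −Δu + K e^{κu} = g on ℤ² satisfying u_i(x) → a_i as x → ∞ for constants a₁, a₂ ∈ ℝ. Then a₁ = a₂ and u₁ ≡ u₂. -/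
set_option linter.unnecessarySeqFocus false
set_option linter.deprecated false
set_option linter.unusedVariables false


lemma int_le_sq (a : ℤ) : a ≤ a ^ 2 := by
  rcases le_or_gt a 0 with h | h
  · exact le_trans h (sq_nonneg a)
  · nlinarith

lemma finite_np_le (m : ℤ) : {x : ℤ × ℤ | x.1 ^ 2 + x.2 ^ 2 ≤ m}.Finite := by
  apply (Set.finite_Icc ((-m, -m) : ℤ × ℤ) (m, m)).subset
  intro x hx
  simp only [Set.mem_setOf_eq] at hx
  have h1 : x.1 ^ 2 ≤ m := by nlinarith [sq_nonneg x.2]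
  have h2 : x.2 ^ 2 ≤ m := by nlinarith [sq_nonneg x.1]
  have := int_le_sq x.1
  have := int_le_sq (-x.1)
  have := int_le_sq x.2
  have := int_le_sq (-x.2)
  simp only [Set.mem_Icc, Prod.le_def]
  constructor <;> constructor <;> nlinarith

lemma closed_eq_univ {A : Set (ℤ × ℤ)} (x₀ : ℤ × ℤ) (hx₀ : x₀ ∈ A)
    (h : ∀ x ∈ A, (x.1 + 1, x.2) ∈ A ∧ (x.1 - 1, x.2) ∈ A ∧ (x.1, x.2 + 1) ∈ A ∧
      (x.1, x.2 - 1) ∈ A) : ∀ y, y ∈ A := by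
  have hhor : ∀ i : ℤ, (x₀.1 + i, x₀.2) ∈ A := by
    intro i
    induction i using Int.induction_on with
    | zero => simpa using hx₀
    | succ n ih =>
      have := (h _ ih).1
      convert this using 2 <;> push_cast <;> ring
    | pred n ih =>
      have := (h _ ih).2.1
      convert this using 2 <;> push_cast <;> ring
  have hall : ∀ i j : ℤ, (x₀.1 + i, x₀.2 + j) ∈ A := by
    intro i j
    induction j using Int.induction_on with
    | zero => simpa using hhor i
    | succ n ih =>
      have := (h _ ih).2.2.1
      convert this using 2 <;> push_cast <;> ring
    | pred n ih =>
      have := (h _ ih).2.2.2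
      convert this using 2 <;> push_cast <;> ring
  intro y
  have := hall (y.1 - x₀.1) (y.2 - x₀.2)
  simpa using this

lemma exists_global_min (v : ℤ × ℤ → ℝ) (L : ℝ)
    (hv : Filter.Tendsto v Filter.cofinite (nhds L)) (x₀ : ℤ × ℤ) (hx₀ : v x₀ < L) :
    ∃ z, ∀ y, v z ≤ v y := by
  have hev : ∀ᶠ x in Filter.cofinite, v x₀ < v x := hv (Ioi_mem_nhds hx₀)
  have hfin : {x | ¬ v x₀ < v x}.Finite := Filter.eventually_cofinite.mp hev
  have hne : hfin.toFinset.Nonempty := ⟨x₀, by simp⟩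
  obtain ⟨z, hz, hzmin⟩ := hfin.toFinset.exists_min_image v hne
  refine ⟨z, fun y => ?_⟩
  by_cases hy : y ∈ hfin.toFinset
  · exact hzmin y hy
  · have h1 : v z ≤ v x₀ := hzmin x₀ (by simp)
    have h2 : v x₀ < v y := by
      simp only [Set.Finite.mem_toFinset, Set.mem_setOf_eq, not_not] at hy
      exact hy
    linarith

lemma exists_global_max (v : ℤ × ℤ → ℝ) (L : ℝ)
    (hv : Filter.Tendsto v Filter.cofinite (nhds L)) (x₀ : ℤ × ℤ) (hx₀ : L < v x₀) :
    ∃ z, ∀ y, v y ≤ v z := by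
  obtain ⟨z, hz⟩ := exists_global_min (fun x => -v x) (-L) (hv.neg) x₀ (by simpa using hx₀)
  exact ⟨z, fun y => by have := hz y; simpa using this⟩


noncomputable def phi (x : ℤ × ℤ) : ℝ :=
  Real.log ((x.1 : ℝ) ^ 2 + (x.2 : ℝ) ^ 2) - 1 / ((x.1 : ℝ) ^ 2 + (x.2 : ℝ) ^ 2)

lemma hnum_aux (t : ℝ) (ht : 100 ≤ t) :
    4 / t + 2 / t ^ 2 < 4 / (t + 1) + 8 * t / (t + 1) ^ 3 := by
  have h0 : (0:ℝ) < t := by linarith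
  have hs : (0:ℝ) < t + 1 := by linarith
  rw [div_add_div _ _ (by positivity) (by positivity),
    div_add_div _ _ (by positivity) (by positivity),
    div_lt_div_iff₀ (by positivity) (by positivity)]
  nlinarith [mul_nonneg (mul_nonneg (by linarith : (0:ℝ) ≤ t - 100) h0.le) h0.le,
    mul_nonneg (by linarith : (0:ℝ) ≤ t - 100) h0.le, sq_nonneg t]

lemma real_key (p q : ℝ) (h : 100 ≤ p ^ 2 + q ^ 2) :
    (Real.log ((p + 1) ^ 2 + q ^ 2) - 1 / ((p + 1) ^ 2 + q ^ 2)) +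
      (Real.log ((p - 1) ^ 2 + q ^ 2) - 1 / ((p - 1) ^ 2 + q ^ 2)) +
      (Real.log (p ^ 2 + (q + 1) ^ 2) - 1 / (p ^ 2 + (q + 1) ^ 2)) +
      (Real.log (p ^ 2 + (q - 1) ^ 2) - 1 / (p ^ 2 + (q - 1) ^ 2)) -
      4 * (Real.log (p ^ 2 + q ^ 2) - 1 / (p ^ 2 + q ^ 2)) < 0 := by
  have h1 : (0:ℝ) < (p + 1) ^ 2 + q ^ 2 := by nlinarith [sq_nonneg (20*p + 21), sq_nonneg q]
  have h2 : (0:ℝ) < (p - 1) ^ 2 + q ^ 2 := by nlinarith [sq_nonneg (20*p - 21), sq_nonneg q]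
  have h3 : (0:ℝ) < p ^ 2 + (q + 1) ^ 2 := by nlinarith [sq_nonneg (20*q + 21), sq_nonneg p]
  have h4 : (0:ℝ) < p ^ 2 + (q - 1) ^ 2 := by nlinarith [sq_nonneg (20*q - 21), sq_nonneg p]
  have h0 : (0:ℝ) < p ^ 2 + q ^ 2 := by linarith
  have hs : (0:ℝ) < p ^ 2 + q ^ 2 + 1 := by linarith
  -- log part
  have key1 : Real.log ((p + 1) ^ 2 + q ^ 2) + Real.log ((p - 1) ^ 2 + q ^ 2)
      - 2 * Real.log (p ^ 2 + q ^ 2)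
      ≤ ((p + 1) ^ 2 + q ^ 2) * ((p - 1) ^ 2 + q ^ 2) / (p ^ 2 + q ^ 2) ^ 2 - 1 := by
    have hq : (0:ℝ) < ((p + 1) ^ 2 + q ^ 2) * ((p - 1) ^ 2 + q ^ 2) / (p ^ 2 + q ^ 2) ^ 2 :=
      by positivity
    have := Real.log_le_sub_one_of_pos hq
    rw [Real.log_div (by positivity) (by positivity), Real.log_mul h1.ne' h2.ne',
      Real.log_pow] at this
    push_cast at this
    linarith
  have key2 : Real.log (p ^ 2 + (q + 1) ^ 2) + Real.log (p ^ 2 + (q - 1) ^ 2)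
      - 2 * Real.log (p ^ 2 + q ^ 2)
      ≤ (p ^ 2 + (q + 1) ^ 2) * (p ^ 2 + (q - 1) ^ 2) / (p ^ 2 + q ^ 2) ^ 2 - 1 := by
    have hq : (0:ℝ) < (p ^ 2 + (q + 1) ^ 2) * (p ^ 2 + (q - 1) ^ 2) / (p ^ 2 + q ^ 2) ^ 2 :=
      by positivity
    have := Real.log_le_sub_one_of_pos hq
    rw [Real.log_div (by positivity) (by positivity), Real.log_mul h3.ne' h4.ne',
      Real.log_pow] at this
    push_cast at this
    linarith
  have hprodsum : ((p + 1) ^ 2 + q ^ 2) * ((p - 1) ^ 2 + q ^ 2) / (p ^ 2 + q ^ 2) ^ 2 - 1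
      + ((p ^ 2 + (q + 1) ^ 2) * (p ^ 2 + (q - 1) ^ 2) / (p ^ 2 + q ^ 2) ^ 2 - 1)
      = 2 / (p ^ 2 + q ^ 2) ^ 2 := by
    field_simp
    ring
  -- reciprocal part, pairs
  have r12 : 2 / (p ^ 2 + q ^ 2 + 1) + 8 * p ^ 2 / (p ^ 2 + q ^ 2 + 1) ^ 3
      ≤ 1 / ((p + 1) ^ 2 + q ^ 2) + 1 / ((p - 1) ^ 2 + q ^ 2) := by
    rw [div_add_div _ _ (by positivity) (by positivity),
      div_add_div _ _ h1.ne' h2.ne', div_le_div_iff₀ (by positivity) (by positivity)]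
    nlinarith [mul_nonneg (mul_nonneg (sq_nonneg (p*p)) hs.le) hs.le, sq_nonneg (p*q), hs.le,
      mul_nonneg (mul_nonneg (sq_nonneg (p^2)) hs.le) hs.le]
  have r34 : 2 / (p ^ 2 + q ^ 2 + 1) + 8 * q ^ 2 / (p ^ 2 + q ^ 2 + 1) ^ 3
      ≤ 1 / (p ^ 2 + (q + 1) ^ 2) + 1 / (p ^ 2 + (q - 1) ^ 2) := by
    rw [div_add_div _ _ (by positivity) (by positivity),
      div_add_div _ _ h3.ne' h4.ne', div_le_div_iff₀ (by positivity) (by positivity)]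
    nlinarith [mul_nonneg (mul_nonneg (sq_nonneg (q*q)) hs.le) hs.le, sq_nonneg (p*q), hs.le,
      mul_nonneg (mul_nonneg (sq_nonneg (q^2)) hs.le) hs.le]
  -- numeric comparison
  have hnum : 4 / (p ^ 2 + q ^ 2) + 2 / (p ^ 2 + q ^ 2) ^ 2
      < 4 / (p ^ 2 + q ^ 2 + 1) + 8 * (p ^ 2 + q ^ 2) / (p ^ 2 + q ^ 2 + 1) ^ 3 :=
    hnum_aux _ h
  have hsplit : 8 * (p ^ 2 + q ^ 2) / (p ^ 2 + q ^ 2 + 1) ^ 3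
      = 8 * p ^ 2 / (p ^ 2 + q ^ 2 + 1) ^ 3 + 8 * q ^ 2 / (p ^ 2 + q ^ 2 + 1) ^ 3 := by
    field_simp
  have hlogsum : Real.log ((p + 1) ^ 2 + q ^ 2) + Real.log ((p - 1) ^ 2 + q ^ 2)
      + Real.log (p ^ 2 + (q + 1) ^ 2) + Real.log (p ^ 2 + (q - 1) ^ 2)
      - 4 * Real.log (p ^ 2 + q ^ 2) ≤ 2 / (p ^ 2 + q ^ 2) ^ 2 := by
    linarith [key1, key2, hprodsum]
  have hrecsum : 4 / (p ^ 2 + q ^ 2) + 2 / (p ^ 2 + q ^ 2) ^ 2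
      < 1 / ((p + 1) ^ 2 + q ^ 2) + 1 / ((p - 1) ^ 2 + q ^ 2)
      + 1 / (p ^ 2 + (q + 1) ^ 2) + 1 / (p ^ 2 + (q - 1) ^ 2) := by
    have hc := add_le_add r12 r34
    calc 4 / (p ^ 2 + q ^ 2) + 2 / (p ^ 2 + q ^ 2) ^ 2
        < 4 / (p ^ 2 + q ^ 2 + 1) + 8 * (p ^ 2 + q ^ 2) / (p ^ 2 + q ^ 2 + 1) ^ 3 := hnum
      _ = (2 / (p ^ 2 + q ^ 2 + 1) + 8 * p ^ 2 / (p ^ 2 + q ^ 2 + 1) ^ 3)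
          + (2 / (p ^ 2 + q ^ 2 + 1) + 8 * q ^ 2 / (p ^ 2 + q ^ 2 + 1) ^ 3) := by
          rw [hsplit]; ring
      _ ≤ (1 / ((p + 1) ^ 2 + q ^ 2) + 1 / ((p - 1) ^ 2 + q ^ 2))
          + (1 / (p ^ 2 + (q + 1) ^ 2) + 1 / (p ^ 2 + (q - 1) ^ 2)) := hc
      _ = 1 / ((p + 1) ^ 2 + q ^ 2) + 1 / ((p - 1) ^ 2 + q ^ 2)
          + 1 / (p ^ 2 + (q + 1) ^ 2) + 1 / (p ^ 2 + (q - 1) ^ 2) := by ring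
  have hrecsum' : 4 * (1 / (p ^ 2 + q ^ 2)) + 2 * (1 / (p ^ 2 + q ^ 2) ^ 2)
      < 1 / ((p + 1) ^ 2 + q ^ 2) + 1 / ((p - 1) ^ 2 + q ^ 2)
      + 1 / (p ^ 2 + (q + 1) ^ 2) + 1 / (p ^ 2 + (q - 1) ^ 2) := by
    rw [mul_one_div, mul_one_div]; exact hrecsum
  have hlogsum' : Real.log ((p + 1) ^ 2 + q ^ 2) + Real.log ((p - 1) ^ 2 + q ^ 2)
      + Real.log (p ^ 2 + (q + 1) ^ 2) + Real.log (p ^ 2 + (q - 1) ^ 2)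
      - 4 * Real.log (p ^ 2 + q ^ 2) ≤ 2 * (1 / (p ^ 2 + q ^ 2) ^ 2) := by
    rw [mul_one_div]; exact hlogsum
  clear key1 key2 hprodsum r12 r34 hnum hsplit hlogsum hrecsum h h1 h2 h3 h4 h0 hs
  generalize Real.log ((p + 1) ^ 2 + q ^ 2) = L1 at hlogsum' ⊢
  generalize Real.log ((p - 1) ^ 2 + q ^ 2) = L2 at hlogsum' ⊢
  generalize Real.log (p ^ 2 + (q + 1) ^ 2) = L3 at hlogsum' ⊢
  generalize Real.log (p ^ 2 + q ^ 2) = L0 at hlogsum' ⊢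
  generalize Real.log (p ^ 2 + (q - 1) ^ 2) = L4 at hlogsum' ⊢
  generalize (1 : ℝ) / ((p + 1) ^ 2 + q ^ 2) = V1 at hrecsum' ⊢
  generalize (1 : ℝ) / ((p - 1) ^ 2 + q ^ 2) = V2 at hrecsum' ⊢
  generalize (1 : ℝ) / (p ^ 2 + (q + 1) ^ 2) = V3 at hrecsum' ⊢
  generalize (1 : ℝ) / (p ^ 2 + (q - 1) ^ 2) = V4 at hrecsum' ⊢
  generalize (1 : ℝ) / (p ^ 2 + q ^ 2) = V0 at hrecsum' ⊢
  generalize (1 : ℝ) / (p ^ 2 + q ^ 2) ^ 2 = V00 at hlogsum' hrecsum' ⊢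
  linarith [hlogsum', hrecsum']

lemma phi_lap_neg {z : ℤ × ℤ} (hz : 100 ≤ z.1 ^ 2 + z.2 ^ 2) :
    latticeLap phi z < 0 := by
  have hzr : (100:ℝ) ≤ (z.1:ℝ) ^ 2 + (z.2:ℝ) ^ 2 := by exact_mod_cast hz
  have := real_key (z.1:ℝ) (z.2:ℝ) hzr
  simp only [latticeLap, phi]
  push_cast
  ring_nf
  ring_nf at this
  linarith

lemma phi_sublevel_finite (c : ℝ) : {x : ℤ × ℤ | phi x ≤ c}.Finite := by
  set m : ℤ := max ⌈Real.exp (c + 1)⌉ 1 with hmdef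
  have hm1 : Real.exp (c + 1) ≤ (m : ℝ) := by
    refine le_trans (Int.le_ceil _) ?_
    exact_mod_cast le_max_left ⌈Real.exp (c + 1)⌉ 1
  apply (finite_np_le m).subset
  intro x hx
  simp only [Set.mem_setOf_eq, phi] at hx ⊢
  by_contra hc
  push_neg at hc
  have hN : (m : ℝ) < (x.1 : ℝ) ^ 2 + (x.2 : ℝ) ^ 2 := by exact_mod_cast hc
  have hone : (1:ℝ) ≤ (x.1 : ℝ) ^ 2 + (x.2 : ℝ) ^ 2 := by
    have hone1 : (1:ℤ) ≤ m := le_max_right _ _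
    have hone2 : (1:ℝ) ≤ (m:ℝ) := by exact_mod_cast hone1
    linarith
  have hNpos : (0:ℝ) < (x.1 : ℝ) ^ 2 + (x.2 : ℝ) ^ 2 := by linarith
  have hlog : c + 1 < Real.log ((x.1 : ℝ) ^ 2 + (x.2 : ℝ) ^ 2) := by
    have := Real.log_lt_log (Real.exp_pos (c + 1)) (by linarith : Real.exp (c+1) < (x.1 : ℝ) ^ 2 + (x.2 : ℝ) ^ 2)
    rwa [Real.log_exp] at this
  have hinv : 1 / ((x.1 : ℝ) ^ 2 + (x.2 : ℝ) ^ 2) ≤ 1 := by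
    rw [div_le_one hNpos]; exact hone
  linarith

lemma no_positive_superharmonic (h : ℤ × ℤ → ℝ)
    (hpos : ∀ x, 0 < h x)
    (hsup : ∀ x, latticeLap h x ≤ 0)
    (hlim : Filter.Tendsto h Filter.cofinite (nhds 0)) : False := by
  have hSfin : ({z : ℤ × ℤ | 100 ≤ z.1 ^ 2 + z.2 ^ 2 ∧ z.1 ^ 2 + z.2 ^ 2 ≤ 201}).Finite :=
    (finite_np_le 201).subset (fun x hx => hx.2)
  have hSne : ((10, 0) : ℤ × ℤ) ∈ {z : ℤ × ℤ | 100 ≤ z.1 ^ 2 + z.2 ^ 2 ∧ z.1 ^ 2 + z.2 ^ 2 ≤ 201} := by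
    constructor <;> norm_num
  obtain ⟨zh, hzhS, hδ⟩ := hSfin.toFinset.exists_min_image h ⟨(10, 0), hSfin.mem_toFinset.mpr hSne⟩
  obtain ⟨zp, hzpS, hΦ⟩ := hSfin.toFinset.exists_min_image phi ⟨(10, 0), hSfin.mem_toFinset.mpr hSne⟩
  have hδpos : 0 < h zh := hpos zh
  have main : ∀ ε : ℝ, 0 < ε → ∀ x : ℤ × ℤ, 100 ≤ x.1 ^ 2 + x.2 ^ 2 →
      h zh + ε * phi zp ≤ h x + ε * phi x := by
    intro ε hε x hx
    set v : ℤ × ℤ → ℝ := fun y => h y + ε * phi y with hv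
    have hfin : {y : ℤ × ℤ | 100 ≤ y.1 ^ 2 + y.2 ^ 2 ∧ v y ≤ v x}.Finite := by
      apply (phi_sublevel_finite (v x / ε)).subset
      intro y hy
      simp only [Set.mem_setOf_eq] at hy ⊢
      have h0 : ε * phi y ≤ v y := by
        have h2 := (hpos y).le
        simp only [hv]
        linarith
      have h1 : ε * phi y ≤ v x := le_trans h0 hy.2
      rw [le_div_iff₀ hε]
      linarith
    have hne : hfin.toFinset.Nonempty := ⟨x, by
      rw [Set.Finite.mem_toFinset]; exact ⟨hx, le_rfl⟩⟩
    obtain ⟨z, hzmem, hzmin⟩ := hfin.toFinset.exists_min_image v hne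
    rw [Set.Finite.mem_toFinset] at hzmem
    obtain ⟨hzD, hzle⟩ := hzmem
    have hzglobal : ∀ y : ℤ × ℤ, 100 ≤ y.1 ^ 2 + y.2 ^ 2 → v z ≤ v y := by
      intro y hy
      by_cases hmem : y ∈ hfin.toFinset
      · exact hzmin y hmem
      · rw [Set.Finite.mem_toFinset] at hmem
        simp only [Set.mem_setOf_eq] at hmem
        push_neg at hmem
        have := hmem hy
        linarith
    have hz201 : z.1 ^ 2 + z.2 ^ 2 ≤ 201 := by
      by_contra hbig
      push_neg at hbig
      have hn1 : (100:ℤ) ≤ (z.1 + 1) ^ 2 + z.2 ^ 2 := by nlinarith [sq_nonneg (z.1 + 2), sq_nonneg z.2]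
      have hn2 : (100:ℤ) ≤ (z.1 - 1) ^ 2 + z.2 ^ 2 := by nlinarith [sq_nonneg (z.1 - 2), sq_nonneg z.2]
      have hn3 : (100:ℤ) ≤ z.1 ^ 2 + (z.2 + 1) ^ 2 := by nlinarith [sq_nonneg (z.2 + 2), sq_nonneg z.1]
      have hn4 : (100:ℤ) ≤ z.1 ^ 2 + (z.2 - 1) ^ 2 := by nlinarith [sq_nonneg (z.2 - 2), sq_nonneg z.1]
      have d1 := hzglobal (z.1 + 1, z.2) hn1
      have d2 := hzglobal (z.1 - 1, z.2) hn2
      have d3 := hzglobal (z.1, z.2 + 1) hn3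
      have d4 := hzglobal (z.1, z.2 - 1) hn4
      have hl : 0 ≤ latticeLap v z := by
        simp only [latticeLap]
        linarith
      have hlv : latticeLap v z = latticeLap h z + ε * latticeLap phi z := by
        simp only [latticeLap, hv]; ring
      have hphineg : latticeLap phi z < 0 := phi_lap_neg hzD
      have := mul_neg_of_pos_of_neg hε hphineg
      linarith [hsup z]
    have hzS : z ∈ hSfin.toFinset := hSfin.mem_toFinset.mpr ⟨hzD, hz201⟩
    have h4 := hzglobal x hx
    have h1 := hδ z hzS
    have h2 := hΦ z hzS
    have h5 := mul_le_mul_of_nonneg_left h2 hε.le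
    simp only [hv] at h4
    linarith
  have hlow : ∀ x : ℤ × ℤ, 100 ≤ x.1 ^ 2 + x.2 ^ 2 → h zh ≤ h x := by
    intro x hx
    by_contra hc
    push_neg at hc
    rcases le_or_gt (phi x - phi zp) 0 with hP | hP
    · have := main 1 one_pos x hx
      nlinarith
    · have hεpos : 0 < (h zh - h x) / (2 * (phi x - phi zp)) := div_pos (by linarith) (by linarith)
      have hmain := main _ hεpos x hx
      have heq : (h zh - h x) / (2 * (phi x - phi zp)) * (phi x - phi zp) = (h zh - h x) / 2 := by
        field_simp
      nlinarith [hmain, heq]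
  have hev : ∀ᶠ x in Filter.cofinite, h x < h zh :=
    hlim.eventually (eventually_lt_nhds hδpos)
  have hfin2 : {x : ℤ × ℤ | ¬ h x < h zh}.Finite := Filter.eventually_cofinite.mp hev
  have hDfin : {x : ℤ × ℤ | 100 ≤ x.1 ^ 2 + x.2 ^ 2}.Finite :=
    hfin2.subset (fun x hx => not_lt.mpr (hlow x hx))
  have hDinf : {x : ℤ × ℤ | 100 ≤ x.1 ^ 2 + x.2 ^ 2}.Infinite := by
    apply Set.Infinite.mono ?_ (finite_np_le 99).infinite_compl
    intro x hx
    simp only [Set.mem_compl_iff, Set.mem_setOf_eq, not_le] at hx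
    simp only [Set.mem_setOf_eq]
    omega
  exact hDinf hDfin

lemma key_lemma (K : ℤ × ℤ → ℝ) (κ : ℝ) (hK : ∀ x, 0 ≤ K x) (hKne : ∃ x, K x ≠ 0)
    (hκ : 0 < κ) (u₁ u₂ : ℤ × ℤ → ℝ) (a₁ a₂ : ℝ)
    (heq : ∀ x, latticeLap u₁ x - latticeLap u₂ x
      = K x * (Real.exp (κ * u₁ x) - Real.exp (κ * u₂ x)))
    (hlim₁ : Filter.Tendsto u₁ Filter.cofinite (nhds a₁))
    (hlim₂ : Filter.Tendsto u₂ Filter.cofinite (nhds a₂))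
    (hle : a₂ ≤ a₁) : a₁ = a₂ ∧ u₁ = u₂ := by
  set w : ℤ × ℤ → ℝ := fun x => u₁ x - u₂ x with hw
  have hwdef : ∀ y, w y = u₁ y - u₂ y := fun y => rfl
  set a : ℝ := a₁ - a₂ with ha
  have hwlim : Filter.Tendsto w Filter.cofinite (nhds a) := hlim₁.sub hlim₂
  have ha0 : 0 ≤ a := by rw [ha]; linarith
  have hlapw : ∀ x, latticeLap w x = K x * (Real.exp (κ * u₁ x) - Real.exp (κ * u₂ x)) := by
    intro x
    have h1 : latticeLap w x = latticeLap u₁ x - latticeLap u₂ x := by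
      simp only [latticeLap, hw]; ring
    rw [h1, heq x]
  have hsgn_ge : ∀ x, u₂ x ≤ u₁ x → 0 ≤ latticeLap w x := by
    intro x hx
    rw [hlapw x]
    apply mul_nonneg (hK x)
    rw [sub_nonneg]
    exact Real.exp_le_exp.mpr (mul_le_mul_of_nonneg_left hx hκ.le)
  have hsgn_le : ∀ x, u₁ x ≤ u₂ x → latticeLap w x ≤ 0 := by
    intro x hx
    rw [hlapw x]
    apply mul_nonpos_of_nonneg_of_nonpos (hK x)
    rw [sub_nonpos]
    exact Real.exp_le_exp.mpr (mul_le_mul_of_nonneg_left hx hκ.le)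
  -- Step 1 : w ≥ 0
  have hw0 : ∀ x, 0 ≤ w x := by
    by_contra hc
    push_neg at hc
    obtain ⟨x₀, hx₀⟩ := hc
    obtain ⟨z, hzmin⟩ := exists_global_min w a hwlim x₀ (by linarith)
    have hwz : w z < 0 := lt_of_le_of_lt (hzmin x₀) hx₀
    have hconst : ∀ y, w y = w z := by
      apply closed_eq_univ (A := {x | w x = w z}) z rfl
      intro x hx
      simp only [Set.mem_setOf_eq] at hx
      have hneg : u₁ x ≤ u₂ x := by
        have := hwdef x; rw [hx] at this; linarith [hwz]
      have hle' := hsgn_le x hneg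
      simp only [latticeLap] at hle'
      have m1 := hzmin (x.1 + 1, x.2)
      have m2 := hzmin (x.1 - 1, x.2)
      have m3 := hzmin (x.1, x.2 + 1)
      have m4 := hzmin (x.1, x.2 - 1)
      refine ⟨?_, ?_, ?_, ?_⟩ <;> simp only [Set.mem_setOf_eq] <;>
        [exact le_antisymm (by linarith) m1;
         exact le_antisymm (by linarith) m2;
         exact le_antisymm (by linarith) m3;
         exact le_antisymm (by linarith) m4]
    have hwconst : w = fun _ => w z := funext hconst
    rw [hwconst] at hwlim
    have : a = w z := tendsto_nhds_unique hwlim tendsto_const_nhds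
    linarith
  -- Step 2 : w ≤ a
  have hwa : ∀ x, w x ≤ a := by
    by_contra hc
    push_neg at hc
    obtain ⟨x₀, hx₀⟩ := hc
    obtain ⟨z, hzmax⟩ := exists_global_max w a hwlim x₀ hx₀
    have hwz : a < w z := lt_of_lt_of_le hx₀ (hzmax x₀)
    have hconst : ∀ y, w y = w z := by
      apply closed_eq_univ (A := {x | w x = w z}) z rfl
      intro x hx
      simp only [Set.mem_setOf_eq] at hx
      have hposx : u₂ x ≤ u₁ x := by
        have := hwdef x; rw [hx] at this; linarith [hwz, ha0]
      have hge' := hsgn_ge x hposx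
      simp only [latticeLap] at hge'
      have m1 := hzmax (x.1 + 1, x.2)
      have m2 := hzmax (x.1 - 1, x.2)
      have m3 := hzmax (x.1, x.2 + 1)
      have m4 := hzmax (x.1, x.2 - 1)
      refine ⟨?_, ?_, ?_, ?_⟩ <;> simp only [Set.mem_setOf_eq] <;>
        [exact le_antisymm m1 (by linarith);
         exact le_antisymm m2 (by linarith);
         exact le_antisymm m3 (by linarith);
         exact le_antisymm m4 (by linarith)]
    have hwconst : w = fun _ => w z := funext hconst
    rw [hwconst] at hwlim
    have : a = w z := tendsto_nhds_unique hwlim tendsto_const_nhds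
    linarith
  by_cases hall : ∀ x, w x = a
  · -- w is constant a; show a = 0
    obtain ⟨xs, hKxs⟩ := hKne
    have hconstlap : latticeLap w xs = 0 := by
      simp only [latticeLap, hall]; ring
    have hE : Real.exp (κ * u₁ xs) - Real.exp (κ * u₂ xs) = 0 := by
      have h1 := hlapw xs
      rw [hconstlap] at h1
      exact (mul_eq_zero.mp h1.symm).resolve_left hKxs
    have hu : u₁ xs = u₂ xs := by
      have h2 : Real.exp (κ * u₁ xs) = Real.exp (κ * u₂ xs) := by linarith
      have h3 := Real.exp_injective h2
      have h4 : κ ≠ 0 := hκ.ne'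
      field_simp at h3
      tauto
    have ha' : a = 0 := by
      have := hall xs
      have := hwdef xs
      linarith
    constructor
    · rw [ha] at ha'; linarith
    · funext x
      have h5 := hall x
      have h6 := hwdef x
      rw [ha'] at h5
      linarith
  · push_neg at hall
    obtain ⟨x₃, hx₃⟩ := hall
    have hstrict : ∀ x, w x < a := by
      by_contra hc
      push_neg at hc
      obtain ⟨x₂, hx₂⟩ := hc
      have hx₂eq : w x₂ = a := le_antisymm (hwa x₂) hx₂
      have hconst : ∀ y, w y = a := by
        apply closed_eq_univ (A := {x | w x = a}) x₂ hx₂eq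
        intro x hx
        simp only [Set.mem_setOf_eq] at hx
        have hposx : u₂ x ≤ u₁ x := by
          have := hwdef x; rw [hx] at this; linarith [ha0]
        have hge' := hsgn_ge x hposx
        simp only [latticeLap] at hge'
        have m1 := hwa (x.1 + 1, x.2)
        have m2 := hwa (x.1 - 1, x.2)
        have m3 := hwa (x.1, x.2 + 1)
        have m4 := hwa (x.1, x.2 - 1)
        refine ⟨?_, ?_, ?_, ?_⟩ <;> simp only [Set.mem_setOf_eq] <;>
          [exact le_antisymm m1 (by linarith);
           exact le_antisymm m2 (by linarith);
           exact le_antisymm m3 (by linarith);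
           exact le_antisymm m4 (by linarith)]
      exact hx₃ (hconst x₃)
    exfalso
    apply no_positive_superharmonic (fun x => a - w x)
    · intro x
      have := hstrict x
      show (0:ℝ) < a - w x
      linarith
    · intro x
      have hlapneg : latticeLap (fun x => a - w x) x = -latticeLap w x := by
        simp only [latticeLap]; ring
      rw [hlapneg]
      have hposx : u₂ x ≤ u₁ x := by
        have h7 := hwdef x; have h8 := hw0 x; linarith
      linarith [hsgn_ge x hposx]
    · have h9 : Filter.Tendsto (fun x => a - w x) Filter.cofinite (nhds (a - a)) :=
        tendsto_const_nhds.sub hwlim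
      simpa using h9

/-- Uniqueness of bounded solutions to `-Δu + K e^{κu} = g` on `ℤ²` with limits
at infinity. -/
theorem absorption_uniqueness (K g : ℤ × ℤ → ℝ) (C₀ κ : ℝ)
    (hK : ∀ x, 0 ≤ K x) (hKne : ∃ x, K x ≠ 0)
    (hg : Summable g) (hgpos : 0 < ∑' x : ℤ × ℤ, g x)
    (hgK : ∀ x, g x ≤ C₀ * K x)
    (hκ : 0 < κ)
    (u₁ u₂ : ℤ × ℤ → ℝ) (a₁ a₂ : ℝ)
    (heq₁ : ∀ x, -latticeLap u₁ x + K x * Real.exp (κ * u₁ x) = g x)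
    (heq₂ : ∀ x, -latticeLap u₂ x + K x * Real.exp (κ * u₂ x) = g x)
    (hlim₁ : Filter.Tendsto u₁ Filter.cofinite (nhds a₁))
    (hlim₂ : Filter.Tendsto u₂ Filter.cofinite (nhds a₂)) :
    a₁ = a₂ ∧ u₁ = u₂ := by
  rcases le_total a₂ a₁ with hle | hle
  · have heqd : ∀ x, latticeLap u₁ x - latticeLap u₂ x
        = K x * (Real.exp (κ * u₁ x) - Real.exp (κ * u₂ x)) := by
      intro x
      linear_combination heq₂ x - heq₁ x
    exact key_lemma K κ hK hKne hκ u₁ u₂ a₁ a₂ heqd hlim₁ hlim₂ hle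
  · have heqd' : ∀ x, latticeLap u₂ x - latticeLap u₁ x
        = K x * (Real.exp (κ * u₂ x) - Real.exp (κ * u₁ x)) := by
      intro x
      linear_combination heq₁ x - heq₂ x
    obtain ⟨h1, h2⟩ := key_lemma K κ hK hKne hκ u₂ u₁ a₂ a₁ heqd' hlim₂ hlim₁ hle
    exact ⟨h1.symm, h2.symm⟩
end
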